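/- For every n ≥ 1, ∑_{k=0}^{n−1} Q_{n,k}(x) = (x+n)^{n−1}. -/

import Mathlib

open Polynomial

/-- Shor's identity: ∑_{k=0}^{n−1} Q_{n,k}(x) = (x+n)^{n−1} for all n ≥ 1,
where Q_{n,k}(x) = ψ_{k+1}(n−1, x+n). -/
theorem shor_Q_sum
    (psi : ℕ → ℕ → Polynomial ℚ)
    (h_init : psi 0 1 = 1)
    (h_zero : ∀ r, psi r 0 = 0)
    (h_big : ∀ r k, k > r + 1 → psi r k = 0)
    (h_rec : ∀ r k, 1 ≤ k →
      psi (r + 1) k = (X - 1) * (psi r k).comp (X - 1)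
        + psi (r + 1) (k - 1) - (psi (r + 1) (k - 1)).comp (X - 1))
    (Q : ℕ → ℕ → Polynomial ℚ)
    (hQ : ∀ n k, 1 ≤ n → Q n k = (psi (n - 1) (k + 1)).comp (X + C (n : ℚ))) :
    ∀ n : ℕ, 1 ≤ n →
      ∑ k ∈ Finset.range n, Q n k = (X + C (n : ℚ)) ^ (n - 1) := by
  -- extension lemma: the sum over any big enough range is the same
  have ext : ∀ r M, r + 2 ≤ M →
      ∑ j ∈ Finset.range (r + 2), psi r j = ∑ j ∈ Finset.range M, psi r j := by
    intro r M h
    refine Finset.sum_subset (Finset.range_subset_range.mpr h) ?_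
    intro j _ hj
    exact h_big r j (by simp at hj; omega)
  have key : ∀ r, ∑ j ∈ Finset.range (r + 2), psi r j = X ^ r := by
    intro r
    induction r with
    | zero => simp [Finset.sum_range_succ, h_zero, h_init]
    | succ r ih =>
      set B : Polynomial ℚ := ∑ j ∈ Finset.range (r + 3), psi (r + 1) j with hBdef
      -- shifted sum equals B
      have hshift : ∑ k ∈ Finset.range (r + 3), psi (r + 1) (k + 1) = B := by
        have h4 := Finset.sum_range_succ' (psi (r + 1)) (r + 3)
        have : ∑ j ∈ Finset.range (r + 3 + 1), psi (r + 1) j = B := by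
          rw [hBdef, ext (r + 1) (r + 3 + 1) (by omega)]
        rw [this, h_zero, add_zero] at h4
        exact h4.symm
      -- sum of psi r over the shifted range
      have hr : ∑ k ∈ Finset.range (r + 3), psi r (k + 1) = X ^ r := by
        have h4 := Finset.sum_range_succ' (psi r) (r + 3)
        have h5 : ∑ j ∈ Finset.range (r + 3 + 1), psi r j = X ^ r := by
          rw [← ext r (r + 3 + 1) (by omega)]; exact ih
        rw [h5, h_zero, add_zero] at h4
        exact h4.symm
      -- apply the recurrence termwise
      have hrec : B
          = (X - 1) * (∑ k ∈ Finset.range (r + 3), psi r (k + 1)).comp (X - 1)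
            + B - B.comp (X - 1) := by
        calc B = ∑ k ∈ Finset.range (r + 3), psi (r + 1) (k + 1) := hshift.symm
          _ = ∑ k ∈ Finset.range (r + 3), ((X - 1) * (psi r (k + 1)).comp (X - 1)
                + psi (r + 1) k - (psi (r + 1) k).comp (X - 1)) := by
              refine Finset.sum_congr rfl fun k _ => ?_
              simpa using h_rec r (k + 1) (by omega)
          _ = (X - 1) * (∑ k ∈ Finset.range (r + 3), psi r (k + 1)).comp (X - 1)
                + B - B.comp (X - 1) := by
              rw [Finset.sum_sub_distrib, Finset.sum_add_distrib, Polynomial.sum_comp,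
                Polynomial.sum_comp, Finset.mul_sum, hBdef]
      rw [hr] at hrec
      have hcomp : B.comp (X - 1) = ((X : Polynomial ℚ) - 1) * (X - 1) ^ r := by
        have : (X ^ r : Polynomial ℚ).comp (X - 1) = (X - 1) ^ r := by
          simp
        rw [this] at hrec
        linear_combination hrec
      have hB : B = X ^ (r + 1) := by
        have h6 := congrArg (fun p => p.comp ((X : Polynomial ℚ) + 1)) hcomp
        simp only [Polynomial.comp_assoc, Polynomial.mul_comp, Polynomial.pow_comp,
          Polynomial.sub_comp, Polynomial.X_comp, Polynomial.one_comp] at h6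
        simpa [pow_succ'] using h6
      rw [← hBdef] at *
      exact hB
  intro n hn
  obtain ⟨r, rfl⟩ := Nat.exists_eq_add_of_le hn
  have hsum : ∑ k ∈ Finset.range (1 + r), psi r (k + 1) = X ^ r := by
    have h4 := Finset.sum_range_succ' (psi r) (1 + r)
    have h5 : ∑ j ∈ Finset.range (1 + r + 1), psi r j = X ^ r := by
      rw [show 1 + r + 1 = r + 2 by omega]; exact key r
    have : 1 + r = r + 1 := by omega
    rw [h5, h_zero, add_zero, this] at h4
    rw [this]
    exact h4.symm
  have hQ' : ∀ k, Q (1 + r) k = (psi r (k + 1)).comp (X + C ((1 + r : ℕ) : ℚ)) := by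
    intro k
    have := hQ (1 + r) k (by omega)
    simpa using this
  calc ∑ k ∈ Finset.range (1 + r), Q (1 + r) k
      = ∑ k ∈ Finset.range (1 + r), (psi r (k + 1)).comp (X + C ((1 + r : ℕ) : ℚ)) := by
        exact Finset.sum_congr rfl fun k _ => hQ' k
    _ = (∑ k ∈ Finset.range (1 + r), psi r (k + 1)).comp (X + C ((1 + r : ℕ) : ℚ)) :=
        (Polynomial.sum_comp _ _ _).symm
    _ = (X + C ((1 + r : ℕ) : ℚ)) ^ (1 + r - 1) := by
        rw [show 1 + r = r + 1 by omega] at *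
        rw [hsum]
        simp
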